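/- Let d ≥ 1, let S be a finite set (of semantic labels) with means μ_s^(i) ∈ ℝ and nonnegative reals σ_s^(i) for s ∈ S and channels i ∈ {1,2,3}, let s : [d]×[d] → S be a fixed pixel labeling, and fix s_max ∈ S. Let X and X' be random tensors in ℝ^{d×d×3} with all entries mutually independent, where the entry X_{j,ℓ}^(i) has mean μ_{s(j,ℓ)}^(i) and variance at most (σ_{s(j,ℓ)}^(i))², and the entry X'_{j,ℓ}^(i) has mean μ_{s_max}^(i) and variance at most (σ_{s_max}^(i))². Then E ‖X − X'‖_F ≤ ( Σ_{j,ℓ∈[d]} Σ_{i∈[3]} (σ_{s(j,ℓ)}^(i))² )^{1/2} + ( Σ_{j,ℓ∈[d]} Σ_{i∈[3]} (σ_{s_max}^(i))² )^{1/2} + ( Σ_{(j,ℓ): s(j,ℓ) ≠ s_max} Σ_{i∈[3]} (μ_{s(j,ℓ)}^(i) − μ_{s_max}^(i))² )^{1/2}. -/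

import Mathlib

open MeasureTheory ProbabilityTheory Real
open scoped BigOperators


lemma my_sqrt_sum_sq_add_le {ι : Type*} [Fintype ι] (a b : ι → ℝ) :
    Real.sqrt (∑ i, (a i + b i) ^ 2) ≤
      Real.sqrt (∑ i, (a i) ^ 2) + Real.sqrt (∑ i, (b i) ^ 2) := by
  have h := norm_add_le ((WithLp.equiv 2 (ι → ℝ)).symm a) ((WithLp.equiv 2 (ι → ℝ)).symm b)
  simpa [EuclideanSpace.norm_eq, Real.norm_eq_abs, sq_abs,
    ← WithLp.toLp_add] using h

lemma my_integral_sqrt_le {α : Type*} [MeasurableSpace α] (μ : Measure α)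
    [IsProbabilityMeasure μ] {g : α → ℝ} (hg0 : ∀ ω, 0 ≤ g ω) (hgi : Integrable g μ) :
    ∫ ω, Real.sqrt (g ω) ∂μ ≤ Real.sqrt (∫ ω, g ω ∂μ) := by
  have hm : AEStronglyMeasurable (fun ω => Real.sqrt (g ω)) μ :=
    Real.continuous_sqrt.comp_aestronglyMeasurable hgi.1
  have hmem : MemLp (fun ω => Real.sqrt (g ω)) 2 μ :=
    (memLp_two_iff_integrable_sq hm).2 (by simpa [Real.sq_sqrt (hg0 _)] using hgi)
  have hconj : Real.HolderConjugate 2 2 := Real.HolderConjugate.two_two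
  have h1 : MemLp (fun _ : α => (1 : ℝ)) (ENNReal.ofReal 2) μ := by
    simpa using (memLp_const (1 : ℝ) (μ := μ) (p := ENNReal.ofReal 2))
  have h2 : MemLp (fun ω => Real.sqrt (g ω)) (ENNReal.ofReal 2) μ := by
    convert hmem using 2
    norm_num [ENNReal.ofReal]
  have H := integral_mul_le_Lp_mul_Lq_of_nonneg hconj
    (Filter.Eventually.of_forall fun ω => Real.sqrt_nonneg (g ω))
    (Filter.Eventually.of_forall fun _ => zero_le_one) h2 h1
  simp only [mul_one, Real.one_rpow, integral_const, measure_univ, probReal_univ, ENNReal.toReal_one,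
    smul_eq_mul, one_mul] at H
  calc ∫ ω, Real.sqrt (g ω) ∂μ ≤ (∫ ω, Real.sqrt (g ω) ^ (2:ℝ) ∂μ) ^ (1/2:ℝ) := H
  _ = Real.sqrt (∫ ω, g ω ∂μ) := by
      rw [Real.sqrt_eq_rpow]
      congr 1
      refine integral_congr_ae (Filter.Eventually.of_forall fun ω => ?_)
      show Real.sqrt (g ω) ^ (2:ℝ) = g ω
      rw [show ((2:ℝ)) = ((2:ℕ):ℝ) by norm_num, Real.rpow_natCast, Real.sq_sqrt (hg0 ω)]

/-- **Multiple-semantic-label pixel-level distance bound.**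
Let `s : [d]×[d] → S` be a fixed pixel labeling, `s_max ∈ S`, and let `X, X'` be random
`d × d × 3` tensors with all entries mutually independent, where `X_{j,ℓ}^(i)` has mean
`μ_{s(j,ℓ)}^(i)` and variance at most `(σ_{s(j,ℓ)}^(i))²` while `X'_{j,ℓ}^(i)` has mean
`μ_{s_max}^(i)` and variance at most `(σ_{s_max}^(i))²`. Then
`E‖X − X'‖_F ≤ (Σ_{j,ℓ,i} (σ_{s(j,ℓ)}^(i))²)^{1/2} + (Σ_{j,ℓ,i} (σ_{s_max}^(i))²)^{1/2}
  + (Σ_{(j,ℓ): s(j,ℓ)≠s_max} Σ_i (μ_{s(j,ℓ)}^(i) − μ_{s_max}^(i))²)^{1/2}`. -/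
theorem multi_semantic_pixel_distance_bound
    {α : Type*} [MeasurableSpace α] (μprob : Measure α) [IsProbabilityMeasure μprob]
    (d : ℕ) (hd : 1 ≤ d)
    {S : Type*} [Fintype S] [DecidableEq S]
    (mean : S → Fin 3 → ℝ) (σ : S → Fin 3 → ℝ) (hσ : ∀ s i, 0 ≤ σ s i)
    (lab : Fin d × Fin d → S) (smax : S)
    (Xt Xt' : α → Fin d → Fin d → Fin 3 → ℝ)
    (hindep : iIndepFun
      (fun q : (Fin d × Fin d × Fin 3) × Bool => fun ω =>
        if q.2 then Xt' ω q.1.1 q.1.2.1 q.1.2.2 else Xt ω q.1.1 q.1.2.1 q.1.2.2) μprob)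
    (hL2 : ∀ (j ℓ : Fin d) (i : Fin 3), MemLp (fun ω => Xt ω j ℓ i) 2 μprob)
    (hL2' : ∀ (j ℓ : Fin d) (i : Fin 3), MemLp (fun ω => Xt' ω j ℓ i) 2 μprob)
    (hmean : ∀ (j ℓ : Fin d) (i : Fin 3),
      (∫ ω, Xt ω j ℓ i ∂μprob) = mean (lab (j, ℓ)) i)
    (hmean' : ∀ (j ℓ : Fin d) (i : Fin 3),
      (∫ ω, Xt' ω j ℓ i ∂μprob) = mean smax i)
    (hvar : ∀ (j ℓ : Fin d) (i : Fin 3),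
      (∫ ω, (Xt ω j ℓ i - mean (lab (j, ℓ)) i) ^ 2 ∂μprob) ≤ (σ (lab (j, ℓ)) i) ^ 2)
    (hvar' : ∀ (j ℓ : Fin d) (i : Fin 3),
      (∫ ω, (Xt' ω j ℓ i - mean smax i) ^ 2 ∂μprob) ≤ (σ smax i) ^ 2) :
    (∫ ω, Real.sqrt (∑ j, ∑ ℓ, ∑ i, (Xt ω j ℓ i - Xt' ω j ℓ i) ^ 2) ∂μprob) ≤
      Real.sqrt (∑ j, ∑ ℓ, ∑ i, (σ (lab (j, ℓ)) i) ^ 2) +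
        Real.sqrt (∑ j : Fin d, ∑ ℓ : Fin d, ∑ i, (σ smax i) ^ 2) +
        Real.sqrt (∑ j, ∑ ℓ, ∑ i,
          if lab (j, ℓ) ≠ smax then (mean (lab (j, ℓ)) i - mean smax i) ^ 2 else 0) := by
  set A : α → ℝ := fun ω => ∑ j, ∑ ℓ, ∑ i, (Xt ω j ℓ i - mean (lab (j, ℓ)) i) ^ 2 with hA
  set B : α → ℝ := fun ω => ∑ j, ∑ ℓ, ∑ i, (Xt' ω j ℓ i - mean smax i) ^ 2 with hB
  set C : ℝ := ∑ j, ∑ ℓ, ∑ i, (mean (lab (j, ℓ)) i - mean smax i) ^ 2 with hC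
  have key : ∀ (F : Fin d → Fin d → Fin 3 → ℝ),
      (∑ j, ∑ ℓ, ∑ i, F j ℓ i) = ∑ q : Fin d × Fin d × Fin 3, F q.1 q.2.1 q.2.2 := by
    intro F; simp [Fintype.sum_prod_type]
  -- pointwise triangle inequality
  have hpt : ∀ ω, Real.sqrt (∑ j, ∑ ℓ, ∑ i, (Xt ω j ℓ i - Xt' ω j ℓ i) ^ 2) ≤
      Real.sqrt (A ω) + Real.sqrt (B ω) + Real.sqrt C := by
    intro ω
    have e1 : (∑ j, ∑ ℓ, ∑ i, (Xt ω j ℓ i - Xt' ω j ℓ i) ^ 2) =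
        ∑ q : Fin d × Fin d × Fin 3,
          ((Xt ω q.1 q.2.1 q.2.2 - mean (lab (q.1, q.2.1)) q.2.2) +
            ((mean (lab (q.1, q.2.1)) q.2.2 - mean smax q.2.2) +
              (mean smax q.2.2 - Xt' ω q.1 q.2.1 q.2.2))) ^ 2 := by
      rw [key]; exact Finset.sum_congr rfl fun q _ => by ring
    rw [e1]
    calc _ ≤ Real.sqrt (∑ q : Fin d × Fin d × Fin 3,
            (Xt ω q.1 q.2.1 q.2.2 - mean (lab (q.1, q.2.1)) q.2.2) ^ 2) +
          Real.sqrt (∑ q : Fin d × Fin d × Fin 3,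
            ((mean (lab (q.1, q.2.1)) q.2.2 - mean smax q.2.2) +
              (mean smax q.2.2 - Xt' ω q.1 q.2.1 q.2.2)) ^ 2) :=
        my_sqrt_sum_sq_add_le _ _
      _ ≤ Real.sqrt (∑ q : Fin d × Fin d × Fin 3,
            (Xt ω q.1 q.2.1 q.2.2 - mean (lab (q.1, q.2.1)) q.2.2) ^ 2) +
          (Real.sqrt (∑ q : Fin d × Fin d × Fin 3,
              (mean (lab (q.1, q.2.1)) q.2.2 - mean smax q.2.2) ^ 2) +
            Real.sqrt (∑ q : Fin d × Fin d × Fin 3,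
              (mean smax q.2.2 - Xt' ω q.1 q.2.1 q.2.2) ^ 2)) :=
        add_le_add_right (my_sqrt_sum_sq_add_le _ _) _
      _ = Real.sqrt (A ω) + Real.sqrt (B ω) + Real.sqrt C := by
        have eB : (∑ q : Fin d × Fin d × Fin 3,
            (mean smax q.2.2 - Xt' ω q.1 q.2.1 q.2.2) ^ 2) = B ω := by
          simp only [hB]
          rw [key (fun j ℓ i => (Xt' ω j ℓ i - mean smax i) ^ 2)]
          exact Finset.sum_congr rfl fun q _ => by ring
        rw [eB]
        simp only [hA, hC]
        rw [key (fun j ℓ i => (Xt ω j ℓ i - mean (lab (j, ℓ)) i) ^ 2),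
          key (fun j ℓ i => (mean (lab (j, ℓ)) i - mean smax i) ^ 2)]
        ring
  -- integrability
  have hAe : ∀ (j ℓ : Fin d) (i : Fin 3),
      Integrable (fun ω => (Xt ω j ℓ i - mean (lab (j, ℓ)) i) ^ 2) μprob :=
    fun j ℓ i => ((hL2 j ℓ i).sub (memLp_const _)).integrable_sq
  have hBe : ∀ (j ℓ : Fin d) (i : Fin 3),
      Integrable (fun ω => (Xt' ω j ℓ i - mean smax i) ^ 2) μprob :=
    fun j ℓ i => ((hL2' j ℓ i).sub (memLp_const _)).integrable_sq
  have hAint : Integrable A μprob :=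
    integrable_finset_sum _ fun j _ => integrable_finset_sum _ fun ℓ _ =>
      integrable_finset_sum _ fun i _ => hAe j ℓ i
  have hBint : Integrable B μprob :=
    integrable_finset_sum _ fun j _ => integrable_finset_sum _ fun ℓ _ =>
      integrable_finset_sum _ fun i _ => hBe j ℓ i
  have hA0 : ∀ ω, 0 ≤ A ω := fun ω =>
    Finset.sum_nonneg fun j _ => Finset.sum_nonneg fun ℓ _ =>
      Finset.sum_nonneg fun i _ => sq_nonneg _
  have hB0 : ∀ ω, 0 ≤ B ω := fun ω =>
    Finset.sum_nonneg fun j _ => Finset.sum_nonneg fun ℓ _ =>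
      Finset.sum_nonneg fun i _ => sq_nonneg _
  have hsqrtInt : ∀ (g : α → ℝ), (∀ ω, 0 ≤ g ω) → Integrable g μprob →
      Integrable (fun ω => Real.sqrt (g ω)) μprob := by
    intro g hg0 hgi
    have hm : AEStronglyMeasurable (fun ω => Real.sqrt (g ω)) μprob :=
      Real.continuous_sqrt.comp_aestronglyMeasurable hgi.1
    exact ((memLp_two_iff_integrable_sq hm).2
      (by simpa [Real.sq_sqrt (hg0 _)] using hgi)).integrable (by norm_num)
  have hGint : Integrable (fun ω => Real.sqrt (A ω) + Real.sqrt (B ω) + Real.sqrt C) μprob :=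
    ((hsqrtInt A hA0 hAint).add (hsqrtInt B hB0 hBint)).add (integrable_const _)
  -- integrate the pointwise bound
  have step1 : (∫ ω, Real.sqrt (∑ j, ∑ ℓ, ∑ i, (Xt ω j ℓ i - Xt' ω j ℓ i) ^ 2) ∂μprob) ≤
      ∫ ω, (Real.sqrt (A ω) + Real.sqrt (B ω) + Real.sqrt C) ∂μprob :=
    integral_mono_of_nonneg
      (Filter.Eventually.of_forall fun ω => Real.sqrt_nonneg _) hGint
      (Filter.Eventually.of_forall hpt)
  have step2 : (∫ ω, (Real.sqrt (A ω) + Real.sqrt (B ω) + Real.sqrt C) ∂μprob) =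
      (∫ ω, Real.sqrt (A ω) ∂μprob) + (∫ ω, Real.sqrt (B ω) ∂μprob) + Real.sqrt C := by
    have hABint : Integrable (fun ω => Real.sqrt (A ω) + Real.sqrt (B ω)) μprob :=
      (hsqrtInt A hA0 hAint).add (hsqrtInt B hB0 hBint)
    rw [integral_add hABint (integrable_const _),
      integral_add (hsqrtInt A hA0 hAint) (hsqrtInt B hB0 hBint)]
    simp
  -- bound each term
  have hintA : (∫ ω, A ω ∂μprob) ≤ ∑ j, ∑ ℓ, ∑ i, (σ (lab (j, ℓ)) i) ^ 2 := by
    simp only [hA]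
    rw [integral_finset_sum _ (fun j _ => integrable_finset_sum _ fun ℓ _ =>
      integrable_finset_sum _ fun i _ => hAe j ℓ i)]
    refine Finset.sum_le_sum fun j _ => ?_
    rw [integral_finset_sum _ (fun ℓ _ => integrable_finset_sum _ fun i _ => hAe j ℓ i)]
    refine Finset.sum_le_sum fun ℓ _ => ?_
    rw [integral_finset_sum _ (fun i _ => hAe j ℓ i)]
    exact Finset.sum_le_sum fun i _ => hvar j ℓ i
  have hintB : (∫ ω, B ω ∂μprob) ≤ ∑ j : Fin d, ∑ ℓ : Fin d, ∑ i, (σ smax i) ^ 2 := by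
    simp only [hB]
    rw [integral_finset_sum _ (fun j _ => integrable_finset_sum _ fun ℓ _ =>
      integrable_finset_sum _ fun i _ => hBe j ℓ i)]
    refine Finset.sum_le_sum fun j _ => ?_
    rw [integral_finset_sum _ (fun ℓ _ => integrable_finset_sum _ fun i _ => hBe j ℓ i)]
    refine Finset.sum_le_sum fun ℓ _ => ?_
    rw [integral_finset_sum _ (fun i _ => hBe j ℓ i)]
    exact Finset.sum_le_sum fun i _ => hvar' j ℓ i
  have tA : (∫ ω, Real.sqrt (A ω) ∂μprob) ≤
      Real.sqrt (∑ j, ∑ ℓ, ∑ i, (σ (lab (j, ℓ)) i) ^ 2) :=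
    (my_integral_sqrt_le μprob hA0 hAint).trans (Real.sqrt_le_sqrt hintA)
  have tB : (∫ ω, Real.sqrt (B ω) ∂μprob) ≤
      Real.sqrt (∑ j : Fin d, ∑ ℓ : Fin d, ∑ i, (σ smax i) ^ 2) :=
    (my_integral_sqrt_le μprob hB0 hBint).trans (Real.sqrt_le_sqrt hintB)
  have tC : Real.sqrt C = Real.sqrt (∑ j, ∑ ℓ, ∑ i,
      if lab (j, ℓ) ≠ smax then (mean (lab (j, ℓ)) i - mean smax i) ^ 2 else 0) := by
    congr 1
    refine Finset.sum_congr rfl fun j _ => Finset.sum_congr rfl fun ℓ _ =>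
      Finset.sum_congr rfl fun i _ => ?_
    by_cases h : lab (j, ℓ) = smax <;> simp [h]
  calc _ ≤ _ := step1
    _ = _ := step2
    _ ≤ _ := by rw [tC]; exact add_le_add (add_le_add tA tB) le_rfl
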